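/- arXiv:2403.09170 — 3 statements merged into one kernel-verified Lean document; each statement's English description precedes it below -/
import Mathlib

section
/- For any N×n real matrices A (of rank r ≥ 1) and E and any 1 ≤ k ≤ r, the k-th largest singular value of A + E satisfies σ̃_k ≥ σ_k − ‖U_kᵀ·E·V_k‖, where U_k = (u_1,…,u_k) and V_k = (v_1,…,v_k). -/
open MeasureTheory ProbabilityTheory Matrix

noncomputable section

/-- ℓ²→ℓ² operator (spectral) norm of a real matrix. -/
def opNorm {m n : Type*} [Fintype m] [Fintype n] [DecidableEq n]
    (M : Matrix m n ℝ) : ℝ :=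
  ‖LinearMap.toContinuousLinearMap (Matrix.toEuclideanLin M)‖

/-- ℓ²→ℓ² operator (spectral) norm of a complex matrix. -/
def opNormC {m n : Type*} [Fintype m] [Fintype n] [DecidableEq n]
    (M : Matrix m n ℂ) : ℝ :=
  ‖LinearMap.toContinuousLinearMap (Matrix.toEuclideanLin M)‖

/-- Euclidean norm of a finitely indexed real vector. -/
def vnorm {n : Type*} [Fintype n] (x : n → ℝ) : ℝ :=
  Real.sqrt (∑ i, (x i) ^ 2)

/-- `‖M‖_{2,∞}`: the maximum Euclidean norm of the rows of `M`. -/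
def twoInf {m n : Type*} [Fintype m] [Fintype n] (M : Matrix m n ℝ) : ℝ :=
  ⨆ i, vnorm (M i)

/-- The diagonal matrix `diag (σ 1, …, σ m)` built from a 1-indexed sequence `σ`. -/
def sdiag {m : ℕ} (σ : ℕ → ℝ) : Matrix (Fin m) (Fin m) ℝ :=
  Matrix.of fun i j => if i = j then σ ((i : ℕ) + 1) else 0

/-- Orthogonal projection `W_{k,s} W_{k,s}ᵀ` onto the span of the (1-indexed)
columns `k,…,s` of `W`. -/
def projSlice {N m : ℕ} (W : Matrix (Fin N) (Fin m) ℝ) (k s : ℕ) :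
    Matrix (Fin N) (Fin N) ℝ :=
  Matrix.of fun a b =>
    ∑ j : Fin m, if k ≤ (j : ℕ) + 1 ∧ (j : ℕ) + 1 ≤ s then W a j * W b j else 0

/-- `‖·‖_{2,∞}` of the submatrix of `M` given by the (1-indexed) columns `k,…,s`. -/
def sliceTwoInf {N m : ℕ} (M : Matrix (Fin N) (Fin m) ℝ) (k s : ℕ) : ℝ :=
  ⨆ a, Real.sqrt (∑ j : Fin m,
    if k ≤ (j : ℕ) + 1 ∧ (j : ℕ) + 1 ≤ s then (M a j) ^ 2 else 0)

/-- `η = (11 b²/(b−1)²) √(2 (log 9) r + (K+7) log(N+n))`. -/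
def eta (N n r : ℕ) (K b : ℝ) : ℝ :=
  11 * b ^ 2 / (b - 1) ^ 2 *
    Real.sqrt (2 * Real.log 9 * r + (K + 7) * Real.log ((N : ℝ) + n))

/-- `χ(b) = 1 + 1/(4b(b−1))`. -/
def chi (b : ℝ) : ℝ := 1 + 1 / (4 * b * (b - 1))

/-- `ξ(b) = 1 + 1/(2(b−1)²)`. -/
def xib (b : ℝ) : ℝ := 1 + 1 / (2 * (b - 1) ^ 2)

/-- `γ = (9 b²/(b−1)²) √(r (K+7) log(N+n))`. -/
def gam (N n r : ℕ) (K b : ℝ) : ℝ :=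
  9 * b ^ 2 / (b - 1) ^ 2 *
    Real.sqrt ((r : ℝ) * (K + 7) * Real.log ((N : ℝ) + n))

/-- `min {δ_{k-1}, δ_s}` where `δ_j = σ_j − σ_{j+1}` (1-indexed) and `δ_0 = ∞`
(so for `k = 1` the minimum is just `δ_s`). -/
def dmin (σ : ℕ → ℝ) (k s : ℕ) : ℝ :=
  if k = 1 then σ s - σ (s + 1) else min (σ (k - 1) - σ k) (σ s - σ (s + 1))

/-- The symmetric dilation `ℰ = [[0, E], [Eᵀ, 0]]` of a rectangular matrix `E`. -/
def dil {N n : ℕ} (E : Matrix (Fin N) (Fin n) ℝ) :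
    Matrix (Fin N ⊕ Fin n) (Fin N ⊕ Fin n) ℝ :=
  Matrix.fromBlocks 0 E Eᵀ 0

/-- Complex resolvent `G(z) = (z I − ℰ)⁻¹` of the dilation. -/
def resolvC {N n : ℕ} (z : ℂ) (E : Matrix (Fin N) (Fin n) ℝ) :
    Matrix (Fin N ⊕ Fin n) (Fin N ⊕ Fin n) ℂ :=
  (z • (1 : Matrix (Fin N ⊕ Fin n) (Fin N ⊕ Fin n) ℂ) -
      (dil E).map (Complex.ofReal))⁻¹

/-- `φ₁(z) = z − ∑_{t=N+1}^{N+n} G(z)_{tt}` (complex version). -/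
def phi1C {N n : ℕ} (z : ℂ) (E : Matrix (Fin N) (Fin n) ℝ) : ℂ :=
  z - ∑ t : Fin n, resolvC z E (Sum.inr t) (Sum.inr t)

/-- `φ₂(z) = z − ∑_{t=1}^{N} G(z)_{tt}` (complex version). -/
def phi2C {N n : ℕ} (z : ℂ) (E : Matrix (Fin N) (Fin n) ℝ) : ℂ :=
  z - ∑ t : Fin N, resolvC z E (Sum.inl t) (Sum.inl t)

/-- Real resolvent `G(z) = (z I − ℰ)⁻¹` of the dilation, for real `z`. -/
def resolvR {N n : ℕ} (z : ℝ) (E : Matrix (Fin N) (Fin n) ℝ) :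
    Matrix (Fin N ⊕ Fin n) (Fin N ⊕ Fin n) ℝ :=
  (z • (1 : Matrix (Fin N ⊕ Fin n) (Fin N ⊕ Fin n) ℝ) - dil E)⁻¹

/-- `φ₁(z)` for real `z` (equals the complex version at a real point). -/
def phi1R {N n : ℕ} (z : ℝ) (E : Matrix (Fin N) (Fin n) ℝ) : ℝ :=
  z - ∑ t : Fin n, resolvR z E (Sum.inr t) (Sum.inr t)

/-- `φ₂(z)` for real `z` (equals the complex version at a real point). -/
def phi2R {N n : ℕ} (z : ℝ) (E : Matrix (Fin N) (Fin n) ℝ) : ℝ :=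
  z - ∑ t : Fin N, resolvR z E (Sum.inl t) (Sum.inl t)

/-- `Φ(z)`: diagonal matrix whose first `N` diagonal entries are `1/φ₁(z)` and whose
last `n` diagonal entries are `1/φ₂(z)`. -/
def PhiC {N n : ℕ} (z : ℂ) (E : Matrix (Fin N) (Fin n) ℝ) :
    Matrix (Fin N ⊕ Fin n) (Fin N ⊕ Fin n) ℂ :=
  Matrix.of fun p q =>
    if p = q then Sum.elim (fun _ => (phi1C z E)⁻¹) (fun _ => (phi2C z E)⁻¹) p else 0

/-- The `(N+n) × 2r` matrix `𝒰` of eigenvectors of the dilation of `A = U D Vᵀ`. -/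
def calU {N n r : ℕ} (U : Matrix (Fin N) (Fin r) ℝ) (V : Matrix (Fin n) (Fin r) ℝ) :
    Matrix (Fin N ⊕ Fin n) (Fin r ⊕ Fin r) ℝ :=
  Matrix.fromBlocks ((Real.sqrt 2)⁻¹ • U) ((Real.sqrt 2)⁻¹ • U)
    ((Real.sqrt 2)⁻¹ • V) (-((Real.sqrt 2)⁻¹ • V))

/-- Schatten `p`-norm: `(∑ᵢ sᵢ(M)ᵖ)^{1/p}`, where the singular values `sᵢ(M)` are the
square roots of the eigenvalues of `Mᴴ M`. -/
def schatten (p : ℝ) {m r : ℕ} (M : Matrix (Fin m) (Fin r) ℝ) : ℝ :=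
  (∑ i, Real.sqrt ((Matrix.isHermitian_conjTranspose_mul_self M).eigenvalues i) ^ p) ^ (1 / p)


section stmt7helpers

open Matrix

private lemma dotSelf_eq_sum' {t : ℕ} (v : Fin t → ℝ) : v ⬝ᵥ v = ∑ i, v i ^ 2 := by
  simp [dotProduct, sq]

private lemma dotSelf_nonneg' {t : ℕ} (v : Fin t → ℝ) : 0 ≤ v ⬝ᵥ v := by
  rw [dotSelf_eq_sum']; exact Finset.sum_nonneg fun i _ => sq_nonneg _

private lemma isoDot' {a b : ℕ} {P : Matrix (Fin a) (Fin b) ℝ} (hP : Pᵀ * P = 1)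
    (y : Fin b → ℝ) : (P *ᵥ y) ⬝ᵥ (P *ᵥ y) = y ⬝ᵥ y := by
  rw [Matrix.dotProduct_mulVec, ← Matrix.mulVec_transpose, Matrix.mulVec_mulVec, hP,
    Matrix.one_mulVec]

private lemma besselDot' {a b : ℕ} {P : Matrix (Fin a) (Fin b) ℝ} (hP : Pᵀ * P = 1)
    (w : Fin a → ℝ) : (Pᵀ *ᵥ w) ⬝ᵥ (Pᵀ *ᵥ w) ≤ w ⬝ᵥ w := by
  have h1 : w ⬝ᵥ (P *ᵥ (Pᵀ *ᵥ w)) = (Pᵀ *ᵥ w) ⬝ᵥ (Pᵀ *ᵥ w) := by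
    rw [Matrix.dotProduct_mulVec, ← Matrix.mulVec_transpose]
  have h2 : (P *ᵥ (Pᵀ *ᵥ w)) ⬝ᵥ w = (Pᵀ *ᵥ w) ⬝ᵥ (Pᵀ *ᵥ w) := by
    rw [dotProduct_comm, h1]
  have h3 : (P *ᵥ (Pᵀ *ᵥ w)) ⬝ᵥ (P *ᵥ (Pᵀ *ᵥ w)) = (Pᵀ *ᵥ w) ⬝ᵥ (Pᵀ *ᵥ w) :=
    isoDot' hP _
  have h0 : 0 ≤ (w - P *ᵥ (Pᵀ *ᵥ w)) ⬝ᵥ (w - P *ᵥ (Pᵀ *ᵥ w)) := dotSelf_nonneg' _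
  rw [sub_dotProduct, dotProduct_sub, dotProduct_sub, h1, h2, h3] at h0
  linarith

private lemma norm_symm_eq' {t : ℕ} (v : Fin t → ℝ) :
    ‖(WithLp.equiv 2 (Fin t → ℝ)).symm v‖ = Real.sqrt (v ⬝ᵥ v) := by
  rw [EuclideanSpace.norm_eq, dotSelf_eq_sum']
  congr 1
  exact Finset.sum_congr rfl fun i _ => by simp [Real.norm_eq_abs, sq_abs]

private lemma mulVec_dot_le' {a b : ℕ} (M : Matrix (Fin a) (Fin b) ℝ) (c : Fin b → ℝ) :
    Real.sqrt ((M *ᵥ c) ⬝ᵥ (M *ᵥ c)) ≤ opNorm M * Real.sqrt (c ⬝ᵥ c) := by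
  have h := (LinearMap.toContinuousLinearMap (Matrix.toEuclideanLin M)).le_opNorm
      ((WithLp.equiv 2 (Fin b → ℝ)).symm c)
  rw [LinearMap.coe_toContinuousLinearMap', WithLp.equiv_symm_apply,
    Matrix.toEuclideanLin_apply_piLp_toLp, ← WithLp.equiv_symm_apply, norm_symm_eq', ← WithLp.equiv_symm_apply, norm_symm_eq'] at h
  exact h

private lemma sigma_mono' (σ : ℕ → ℝ) (hdec : ∀ j, 1 ≤ j → σ (j + 1) ≤ σ j) :
    ∀ p q, 1 ≤ p → p ≤ q → σ q ≤ σ p := by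
  intro p q hp hpq
  induction q, hpq using Nat.le_induction with
  | base => exact le_refl _
  | succ q hq ih => exact le_trans (hdec q (le_trans hp hq)) ih

end stmt7helpers

/-- Theorem 7 of the paper, lower bound, deterministic form. -/
theorem stmt7_singular_value_lower_bound
    (N n r : ℕ) (hN : 0 < N) (hn : 0 < n) (hr : 0 < r)
    (A E : Matrix (Fin N) (Fin n) ℝ)
    (U : Matrix (Fin N) (Fin r) ℝ) (V : Matrix (Fin n) (Fin r) ℝ) (σ : ℕ → ℝ)
    (hU : Uᵀ * U = 1) (hV : Vᵀ * V = 1) (hA : A = U * sdiag (m := r) σ * Vᵀ)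
    (hσpos : ∀ j, 1 ≤ j → j ≤ r → 0 < σ j)
    (hσdec : ∀ j, 1 ≤ j → σ (j + 1) ≤ σ j)
    (hσzero : ∀ j, r < j → σ j = 0)
    (m : ℕ) (hm : m = min N n)
    (Ut : Matrix (Fin N) (Fin m) ℝ) (Vt : Matrix (Fin n) (Fin m) ℝ) (σt : ℕ → ℝ)
    (hUt : Utᵀ * Ut = 1) (hVt : Vtᵀ * Vt = 1)
    (hAt : A + E = Ut * sdiag (m := m) σt * Vtᵀ)
    (hσtdec : ∀ j, 1 ≤ j → σt (j + 1) ≤ σt j)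
    (hσtnn : ∀ j, 1 ≤ j → 0 ≤ σt j)
    (k : ℕ) (hk1 : 1 ≤ k) (hkr : k ≤ r) :
    σ k - opNorm ((U.submatrix id (Fin.castLE hkr))ᵀ * E *
        V.submatrix id (Fin.castLE hkr)) ≤ σt k := by
  classical
  set ι : Fin k → Fin r := Fin.castLE hkr with hι
  set Uk : Matrix (Fin N) (Fin k) ℝ := U.submatrix id ι with hUkdef
  set Vk : Matrix (Fin n) (Fin k) ℝ := V.submatrix id ι with hVkdef
  set B : Matrix (Fin k) (Fin k) ℝ := Ukᵀ * E * Vk with hBdef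
  -- orthonormality of the truncated factors
  have hsub : ∀ {s : ℕ} (W : Matrix (Fin s) (Fin r) ℝ), Wᵀ * W = 1 →
      (W.submatrix id ι)ᵀ * (W.submatrix id ι) = 1 := by
    intro s W hW
    ext i j
    have h := congrFun (congrFun hW (ι i)) (ι j)
    simp only [Matrix.mul_apply, Matrix.transpose_apply, Matrix.submatrix_apply, id] at h ⊢
    rw [h]
    simp [Matrix.one_apply, Fin.ext_iff, hι]
  have hUk : Ukᵀ * Uk = 1 := hsub U hU
  have hVk : Vkᵀ * Vk = 1 := hsub V hV
  -- r ≤ m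
  have hrN : r ≤ N := by
    have h1 : (Uᵀ * U).rank = r := by rw [hU]; simp [Matrix.rank_one]
    have h2 := Matrix.rank_mul_le_right Uᵀ U
    have h3 := Matrix.rank_le_card_height U
    simp only [Fintype.card_fin] at h3
    omega
  have hrn : r ≤ n := by
    have h1 : (Vᵀ * V).rank = r := by rw [hV]; simp [Matrix.rank_one]
    have h2 := Matrix.rank_mul_le_right Vᵀ V
    have h3 := Matrix.rank_le_card_height V
    simp only [Fintype.card_fin] at h3
    omega
  have hrm : r ≤ m := by omega
  have hk1m : k - 1 ≤ m := by omega
  -- existence of a unit vector in the kernel of the (k-1) × k matrix M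
  set M : Matrix (Fin (k - 1)) (Fin k) ℝ :=
    Matrix.of fun j i => (Vtᵀ * Vk) (Fin.castLE hk1m j) i with hMdef
  obtain ⟨c, hc0, hcK⟩ : ∃ c : Fin k → ℝ, c ≠ 0 ∧ M *ᵥ c = 0 := by
    by_contra hcon
    push_neg at hcon
    have hinj : Function.Injective M.mulVecLin := by
      rw [← LinearMap.ker_eq_bot, Submodule.eq_bot_iff]
      intro c hc
      by_contra hc0
      exact hcon c hc0 (by simpa [Matrix.mulVecLin_apply] using hc)
    have hle := LinearMap.finrank_le_finrank_of_injective hinj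
    simp only [Module.finrank_fintype_fun_eq_card, Fintype.card_fin] at hle
    omega
  -- normalize c
  obtain ⟨i0, hi0⟩ : ∃ i, c i ≠ 0 := Function.ne_iff.mp hc0
  have hsum_pos : 0 < ∑ i, c i ^ 2 :=
    Finset.sum_pos' (fun i _ => sq_nonneg _) ⟨i0, Finset.mem_univ _, by positivity⟩
  set s : ℝ := Real.sqrt (∑ i, c i ^ 2) with hsdef
  have hs_pos : 0 < s := Real.sqrt_pos.mpr hsum_pos
  set c' : Fin k → ℝ := s⁻¹ • c with hc'def
  have hc'one : c' ⬝ᵥ c' = 1 := by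
    rw [dotSelf_eq_sum']
    have : ∑ i, (s⁻¹ • c) i ^ 2 = s⁻¹ ^ 2 * ∑ i, c i ^ 2 := by
      rw [Finset.mul_sum]
      exact Finset.sum_congr rfl fun i _ => by simp [mul_pow]
    rw [hc'def, this, hsdef, inv_pow, Real.sq_sqrt hsum_pos.le]
    exact inv_mul_cancel₀ hsum_pos.ne'
  have hcK' : M *ᵥ c' = 0 := by
    rw [hc'def, Matrix.mulVec_smul, hcK, smul_zero]
  -- the test vector x
  set x : Fin n → ℝ := Vk *ᵥ c' with hxdef
  have hxx : x ⬝ᵥ x = 1 := by rw [hxdef, isoDot' hVk, hc'one]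
  set w : Fin m → ℝ := Vtᵀ *ᵥ x with hwdef
  have hw0 : ∀ j : Fin m, (j : ℕ) + 1 < k → w j = 0 := by
    intro j hj
    have hjlt : (j : ℕ) < k - 1 := by omega
    have hw1 : w j = ((Vtᵀ * Vk) *ᵥ c') j := by
      rw [hwdef, hxdef, Matrix.mulVec_mulVec]
    have hw2 : ((Vtᵀ * Vk) *ᵥ c') j = (M *ᵥ c') ⟨(j : ℕ), hjlt⟩ := by
      have hcast : Fin.castLE hk1m ⟨(j : ℕ), hjlt⟩ = j := by
        apply Fin.ext; simp
      simp only [Matrix.mulVec, hMdef, Matrix.of_apply, hcast]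
    rw [hw1, hw2, hcK']
    rfl
  -- upper bound: ‖(A+E)x‖ ≤ σt k
  set z : Fin N → ℝ := (A + E) *ᵥ x with hzdef
  have hσtk0 : 0 ≤ σt k := hσtnn k hk1
  have hz : z = Ut *ᵥ (sdiag σt *ᵥ w) := by
    rw [hzdef, hAt, hwdef, ← Matrix.mulVec_mulVec, ← Matrix.mulVec_mulVec]
  have hzz : z ⬝ᵥ z = (sdiag σt *ᵥ w) ⬝ᵥ (sdiag σt *ᵥ w) := by
    rw [hz]; exact isoDot' hUt _
  have hdiag_entry : ∀ j : Fin m, (sdiag σt *ᵥ w) j = σt ((j : ℕ) + 1) * w j := by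
    intro j
    simp [sdiag, Matrix.mulVec, dotProduct, ite_mul, Finset.sum_ite_eq]
  have hww : w ⬝ᵥ w ≤ 1 := by
    have := besselDot' hVt x
    rw [hxx] at this
    exact this
  have hzz_le : z ⬝ᵥ z ≤ σt k ^ 2 := by
    rw [hzz, dotSelf_eq_sum']
    have hterm : ∀ j : Fin m, (sdiag σt *ᵥ w) j ^ 2 ≤ σt k ^ 2 * w j ^ 2 := by
      intro j
      rw [hdiag_entry j]
      by_cases hj : (j : ℕ) + 1 < k
      · rw [hw0 j hj]; simp
      · push_neg at hj
        have h1 : σt ((j : ℕ) + 1) ≤ σt k := sigma_mono' σt hσtdec k ((j : ℕ) + 1) hk1 hj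
        have h2 : 0 ≤ σt ((j : ℕ) + 1) := hσtnn _ (by omega)
        rw [mul_pow]
        exact mul_le_mul_of_nonneg_right (pow_le_pow_left₀ h2 h1 2) (sq_nonneg _)
    calc ∑ j, (sdiag σt *ᵥ w) j ^ 2 ≤ ∑ j, σt k ^ 2 * w j ^ 2 :=
          Finset.sum_le_sum fun j _ => hterm j
      _ ≤ σt k ^ 2 := by
          rw [← Finset.mul_sum, ← dotSelf_eq_sum']
          nlinarith [sq_nonneg (σt k)]
  have hz_le : Real.sqrt (z ⬝ᵥ z) ≤ σt k := by
    rw [show σt k = Real.sqrt (σt k ^ 2) from (Real.sqrt_sq hσtk0).symm]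
    exact Real.sqrt_le_sqrt hzz_le
  -- lower bound
  set y : Fin k → ℝ := Ukᵀ *ᵥ z with hydef
  have hyz : Real.sqrt (y ⬝ᵥ y) ≤ Real.sqrt (z ⬝ᵥ z) :=
    Real.sqrt_le_sqrt (besselDot' hUk z)
  set Dk : Matrix (Fin k) (Fin k) ℝ :=
    Matrix.of (fun i j => if i = j then σ ((i : ℕ) + 1) else 0) with hDkdef
  have hDk : Ukᵀ * A * Vk = Dk := by
    have e0 : Ukᵀ = Uᵀ.submatrix ι id := by
      rw [hUkdef, Matrix.transpose_submatrix]
    have e1 : Ukᵀ * U = (Uᵀ * U).submatrix ι id := by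
      rw [e0]
      exact (Matrix.submatrix_mul Uᵀ U ι id id Function.bijective_id).symm
    have e2 : Vᵀ * Vk = (Vᵀ * V).submatrix id ι := by
      rw [hVkdef]
      exact (Matrix.submatrix_mul Vᵀ V id id ι Function.bijective_id).symm
    have e3 : Ukᵀ * A * Vk = (Ukᵀ * U) * sdiag (m := r) σ * (Vᵀ * Vk) := by
      rw [hA]; simp only [Matrix.mul_assoc]
    rw [e3, e1, e2, hU, hV]
    ext i j
    simp only [Matrix.mul_apply, Matrix.submatrix_apply, Matrix.one_apply, sdiag,
      Matrix.of_apply, id, hDkdef, ite_mul, one_mul, zero_mul, mul_ite, mul_one, mul_zero,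
      Finset.sum_ite_eq, Finset.sum_ite_eq', Finset.mem_univ, if_true]
    simp only [Fin.ext_iff, hι, Fin.coe_castLE]
    rcases eq_or_ne (i : ℕ) (j : ℕ) with h | h <;> simp [h]
  have hy : y = Dk *ᵥ c' + B *ᵥ c' := by
    rw [hydef, hzdef, Matrix.add_mulVec, Matrix.mulVec_add, hxdef,
      Matrix.mulVec_mulVec, Matrix.mulVec_mulVec, Matrix.mulVec_mulVec,
      Matrix.mulVec_mulVec, hDk, hBdef]
  have hσk0 : 0 ≤ σ k := (hσpos k hk1 hkr).le
  have hDk_entry : ∀ i : Fin k, (Dk *ᵥ c') i = σ ((i : ℕ) + 1) * c' i := by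
    intro i
    simp [hDkdef, Matrix.mulVec, dotProduct, ite_mul, Finset.sum_ite_eq]
  have hDlow : σ k ≤ Real.sqrt ((Dk *ᵥ c') ⬝ᵥ (Dk *ᵥ c')) := by
    have hge : σ k ^ 2 ≤ (Dk *ᵥ c') ⬝ᵥ (Dk *ᵥ c') := by
      rw [dotSelf_eq_sum']
      have hterm : ∀ i : Fin k, σ k ^ 2 * c' i ^ 2 ≤ (Dk *ᵥ c') i ^ 2 := by
        intro i
        rw [hDk_entry i, mul_pow]
        have hle : σ k ≤ σ ((i : ℕ) + 1) :=
          sigma_mono' σ hσdec ((i : ℕ) + 1) k (by omega) (by omega)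
        exact mul_le_mul_of_nonneg_right (pow_le_pow_left₀ hσk0 hle 2) (sq_nonneg _)
      calc σ k ^ 2 = σ k ^ 2 * (c' ⬝ᵥ c') := by rw [hc'one]; ring
        _ = ∑ i, σ k ^ 2 * c' i ^ 2 := by rw [dotSelf_eq_sum', Finset.mul_sum]
        _ ≤ ∑ i, (Dk *ᵥ c') i ^ 2 := Finset.sum_le_sum fun i _ => hterm i
    calc σ k = Real.sqrt (σ k ^ 2) := (Real.sqrt_sq hσk0).symm
      _ ≤ _ := Real.sqrt_le_sqrt hge
  have hBle : Real.sqrt ((B *ᵥ c') ⬝ᵥ (B *ᵥ c')) ≤ opNorm B := by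
    have := mulVec_dot_le' B c'
    rw [hc'one, Real.sqrt_one, mul_one] at this
    exact this
  -- triangle inequality via EuclideanSpace
  have htri : Real.sqrt ((Dk *ᵥ c') ⬝ᵥ (Dk *ᵥ c')) ≤
      Real.sqrt (y ⬝ᵥ y) + Real.sqrt ((B *ᵥ c') ⬝ᵥ (B *ᵥ c')) := by
    have h1 : (WithLp.equiv 2 (Fin k → ℝ)).symm (Dk *ᵥ c') =
        (WithLp.equiv 2 (Fin k → ℝ)).symm y - (WithLp.equiv 2 (Fin k → ℝ)).symm (B *ᵥ c') := by
      rw [hy]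
      rw [WithLp.equiv_symm_apply, WithLp.toLp_add]
      abel
    calc Real.sqrt ((Dk *ᵥ c') ⬝ᵥ (Dk *ᵥ c'))
        = ‖(WithLp.equiv 2 (Fin k → ℝ)).symm (Dk *ᵥ c')‖ := (norm_symm_eq' _).symm
      _ ≤ ‖(WithLp.equiv 2 (Fin k → ℝ)).symm y‖ +
            ‖(WithLp.equiv 2 (Fin k → ℝ)).symm (B *ᵥ c')‖ := by
          rw [h1]; exact norm_sub_le _ _
      _ = Real.sqrt (y ⬝ᵥ y) + Real.sqrt ((B *ᵥ c') ⬝ᵥ (B *ᵥ c')) := by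
          rw [norm_symm_eq', norm_symm_eq']
  linarith
end
end

section
/- Let U, V ∈ ℝ^{n×r} have orthonormal columns and set s = ‖(I_n − UUᵀ)·V·Vᵀ‖ (operator norm; s is the sine of the largest principal angle between the column spans of U and V). Then there exists an orthogonal matrix O ∈ ℝ^{r×r} such that: (i) for every unit vector x ∈ ℝⁿ, ‖xᵀ(V − UO)‖ ≤ ‖xᵀ(V − U·Uᵀ·V)‖ + ‖xᵀU‖·s²; (ii) for all unit vectors x ∈ ℝⁿ and y ∈ ℝʳ, |xᵀ(V − UO)·y| ≤ |xᵀ(V − U·Uᵀ·V)·y| + ‖xᵀU‖·s²; and (iii) ‖V − UO‖_{2,∞} ≤ ‖V − U·Uᵀ·V‖_{2,∞} + ‖U‖_{2,∞}·s². -/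
open MeasureTheory ProbabilityTheory Matrix

noncomputable section

section Stmt12Helpers

open Matrix

lemma vnorm_eq_sqrt_dot {k : Type*} [Fintype k] (x : k → ℝ) :
    vnorm x = Real.sqrt (x ⬝ᵥ x) := by
  simp [vnorm, dotProduct, sq]

lemma vnorm_nonneg' {k : Type*} [Fintype k] (x : k → ℝ) : 0 ≤ vnorm x :=
  Real.sqrt_nonneg _

lemma dot_self_nonneg' {k : Type*} [Fintype k] (x : k → ℝ) : 0 ≤ x ⬝ᵥ x :=
  Finset.sum_nonneg fun i _ => mul_self_nonneg _

lemma vnorm_sq_eq {k : Type*} [Fintype k] (x : k → ℝ) : vnorm x ^ 2 = x ⬝ᵥ x := by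
  rw [vnorm_eq_sqrt_dot, Real.sq_sqrt (dot_self_nonneg' x)]

lemma vnorm_eq_norm {k : Type*} [Fintype k] (x : k → ℝ) :
    vnorm x = ‖(WithLp.equiv 2 (k → ℝ)).symm x‖ := by
  rw [EuclideanSpace.norm_eq]
  simp [vnorm, Real.norm_eq_abs, sq_abs]

lemma vnorm_add_le {k : Type*} [Fintype k] (x y : k → ℝ) :
    vnorm (x + y) ≤ vnorm x + vnorm y := by
  rw [vnorm_eq_norm, vnorm_eq_norm, vnorm_eq_norm]
  exact norm_add_le ((WithLp.equiv 2 (k → ℝ)).symm x) ((WithLp.equiv 2 (k → ℝ)).symm y)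

lemma inner_symm_eq_dot {k : Type*} [Fintype k] (x y : k → ℝ) :
    (inner ℝ ((WithLp.equiv 2 (k → ℝ)).symm x) ((WithLp.equiv 2 (k → ℝ)).symm y) : ℝ) = x ⬝ᵥ y := by
  simp [PiLp.inner_apply, RCLike.inner_apply, dotProduct, mul_comm]

lemma abs_dot_le {k : Type*} [Fintype k] (x y : k → ℝ) :
    |x ⬝ᵥ y| ≤ vnorm x * vnorm y := by
  rw [vnorm_eq_norm, vnorm_eq_norm, ← inner_symm_eq_dot]
  exact abs_real_inner_le_norm _ _

lemma dot_mulVec_self {k l : Type*} [Fintype k] [Fintype l] [DecidableEq l]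
    (A : Matrix k l ℝ) (hA : Aᵀ * A = 1) (c : l → ℝ) :
    (A *ᵥ c) ⬝ᵥ (A *ᵥ c) = c ⬝ᵥ c := by
  rw [dotProduct_mulVec, ← mulVec_transpose, mulVec_mulVec, hA, one_mulVec]

lemma vecMul_dot_le {k l : Type*} [Fintype k] [Fintype l] [DecidableEq l]
    (A : Matrix k l ℝ) (hA : Aᵀ * A = 1) (u : k → ℝ) :
    (u ᵥ* A) ⬝ᵥ (u ᵥ* A) ≤ u ⬝ᵥ u := by
  set c := u ᵥ* A with hc
  have h1 : u ⬝ᵥ (A *ᵥ c) = c ⬝ᵥ c := by rw [dotProduct_mulVec]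
  have h2 : (A *ᵥ c) ⬝ᵥ (A *ᵥ c) = c ⬝ᵥ c := dot_mulVec_self A hA c
  have h0 : 0 ≤ (u - A *ᵥ c) ⬝ᵥ (u - A *ᵥ c) := dot_self_nonneg' _
  have h3 : (A *ᵥ c) ⬝ᵥ u = u ⬝ᵥ (A *ᵥ c) := dotProduct_comm _ _
  have hexp : (u - A *ᵥ c) ⬝ᵥ (u - A *ᵥ c)
      = u ⬝ᵥ u - u ⬝ᵥ (A *ᵥ c) - (A *ᵥ c) ⬝ᵥ u + (A *ᵥ c) ⬝ᵥ (A *ᵥ c) := by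
    rw [sub_dotProduct, dotProduct_sub, dotProduct_sub]; ring
  rw [hexp, h1, h2, h3, h1] at h0
  linarith

lemma vnorm_vecMul_le {k l : Type*} [Fintype k] [Fintype l] [DecidableEq l]
    (A : Matrix k l ℝ) (hA : Aᵀ * A = 1) (u : k → ℝ) :
    vnorm (u ᵥ* A) ≤ vnorm u := by
  rw [vnorm_eq_sqrt_dot, vnorm_eq_sqrt_dot]
  exact Real.sqrt_le_sqrt (vecMul_dot_le A hA u)

lemma vnorm_vecMul_orth {l : Type*} [Fintype l] [DecidableEq l]
    (Q : Matrix l l ℝ) (hQ : Qᵀ * Q = 1) (w : l → ℝ) :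
    vnorm (w ᵥ* Qᵀ) = vnorm w := by
  rw [vnorm_eq_sqrt_dot, vnorm_eq_sqrt_dot]
  congr 1
  rw [vecMul_transpose]
  exact dot_mulVec_self Q hQ w

lemma vnorm_vecMul_diagonal_le {l : Type*} [Fintype l] [DecidableEq l]
    (d : l → ℝ) (t : ℝ) (ht : 0 ≤ t) (hd : ∀ i, |d i| ≤ t) (w : l → ℝ) :
    vnorm (w ᵥ* Matrix.diagonal d) ≤ t * vnorm w := by
  have h1 : vnorm (w ᵥ* Matrix.diagonal d) ^ 2 ≤ (t * vnorm w) ^ 2 := by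
    rw [vnorm_sq_eq, mul_pow, vnorm_sq_eq]
    simp only [dotProduct, vecMul_diagonal]
    rw [Finset.mul_sum]
    refine Finset.sum_le_sum fun i _ => ?_
    have hdi : (d i) ^ 2 ≤ t ^ 2 := by
      have := hd i
      nlinarith [sq_abs (d i), abs_nonneg (d i)]
    nlinarith [mul_self_nonneg (w i)]
  have h2 : 0 ≤ t * vnorm w := mul_nonneg ht (vnorm_nonneg' w)
  nlinarith [vnorm_nonneg' (w ᵥ* Matrix.diagonal d)]

lemma vnorm_vecMul_PDQ {l : Type*} [Fintype l] [DecidableEq l]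
    (P Q : Matrix l l ℝ) (d : l → ℝ) (t : ℝ)
    (hP : Pᵀ * P = 1) (hQ : Qᵀ * Q = 1) (ht : 0 ≤ t) (hd : ∀ i, |d i| ≤ t)
    (u : l → ℝ) :
    vnorm (u ᵥ* (P * Matrix.diagonal d * Qᵀ)) ≤ t * vnorm u := by
  have h1 : u ᵥ* (P * Matrix.diagonal d * Qᵀ) = ((u ᵥ* P) ᵥ* Matrix.diagonal d) ᵥ* Qᵀ := by
    rw [vecMul_vecMul, vecMul_vecMul, Matrix.mul_assoc]
  rw [h1, vnorm_vecMul_orth Q hQ]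
  calc vnorm ((u ᵥ* P) ᵥ* Matrix.diagonal d) ≤ t * vnorm (u ᵥ* P) :=
        vnorm_vecMul_diagonal_le d t ht hd _
    _ ≤ t * vnorm u := mul_le_mul_of_nonneg_left (vnorm_vecMul_le P hP u) ht

lemma vnorm_mulVec_le_opNorm {k l : Type*} [Fintype k] [Fintype l] [DecidableEq l]
    (G : Matrix k l ℝ) (w : l → ℝ) :
    vnorm (G *ᵥ w) ≤ opNorm G * vnorm w := by
  have h := (LinearMap.toContinuousLinearMap (Matrix.toEuclideanLin G)).le_opNorm
    ((WithLp.equiv 2 (l → ℝ)).symm w)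
  rw [vnorm_eq_norm, vnorm_eq_norm]
  simpa [opNorm, WithLp.equiv_symm_apply, Matrix.toEuclideanLin_apply_piLp_toLp] using h

lemma single_vecMul_row {k l : Type*} [Fintype k] [DecidableEq k] [Fintype l]
    (A : Matrix k l ℝ) (i : k) : (Pi.single i (1:ℝ)) ᵥ* A = A i := by
  ext j
  simp [Matrix.vecMul, dotProduct, Pi.single_apply]

end Stmt12Helpers

/-- Proposition 19 of the paper: comparison of orthonormal frames
up to an orthogonal transformation, in linear, bilinear and row-wise form. -/
theorem stmt12_procrustes_pointwise_bounds
    (n r : ℕ) (hn : 0 < n) (hr : 0 < r) (hrn : r ≤ n)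
    (U V : Matrix (Fin n) (Fin r) ℝ) (hU : Uᵀ * U = 1) (hV : Vᵀ * V = 1) :
    ∃ O : Matrix (Fin r) (Fin r) ℝ, Oᵀ * O = 1 ∧
      (∀ x : Fin n → ℝ, vnorm x = 1 →
        vnorm (Matrix.vecMul x (V - U * O)) ≤
          vnorm (Matrix.vecMul x (V - U * (Uᵀ * V))) +
            vnorm (Matrix.vecMul x U) * opNorm ((1 - U * Uᵀ) * (V * Vᵀ)) ^ 2) ∧
      (∀ (x : Fin n → ℝ) (y : Fin r → ℝ), vnorm x = 1 → vnorm y = 1 →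
        |dotProduct x ((V - U * O).mulVec y)| ≤
          |dotProduct x ((V - U * (Uᵀ * V)).mulVec y)| +
            vnorm (Matrix.vecMul x U) * opNorm ((1 - U * Uᵀ) * (V * Vᵀ)) ^ 2) ∧
      twoInf (V - U * O) ≤
        twoInf (V - U * (Uᵀ * V)) + twoInf U * opNorm ((1 - U * Uᵀ) * (V * Vᵀ)) ^ 2 := by
  classical
  set M := Uᵀ * V with hM
  have hH : (Mᵀ * M).IsHermitian := Matrix.isHermitian_conjTranspose_mul_self M
  set lam := hH.eigenvalues with hlam
  set q : Fin r → (Fin r → ℝ) := fun i => ⇑(hH.eigenvectorBasis i) with hq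
  have hHq : ∀ i, (Mᵀ * M) *ᵥ q i = lam i • q i := fun i => hH.mulVec_eigenvectorBasis i
  have hqorth : ∀ i j, q i ⬝ᵥ q j = if i = j then 1 else 0 := by
    intro i j
    have h := orthonormal_iff_ite.mp hH.eigenvectorBasis.orthonormal i j
    simpa [PiLp.inner_apply, RCLike.inner_apply, dotProduct, hq,
      mul_comm] using h
  clear_value q
  clear_value lam
  clear_value M
  have hMq : ∀ i j, (M *ᵥ q i) ⬝ᵥ (M *ᵥ q j) = lam j * (if i = j then 1 else 0) := by
    intro i j
    have h1 : (M *ᵥ q i) ⬝ᵥ (M *ᵥ q j) = q i ⬝ᵥ ((Mᵀ * M) *ᵥ q j) := by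
      rw [dotProduct_mulVec, dotProduct_mulVec, ← vecMul_vecMul, vecMul_transpose]
    rw [h1, hHq j, dotProduct_smul, hqorth i j, smul_eq_mul]
  have hMqq : ∀ i, (M *ᵥ q i) ⬝ᵥ (M *ᵥ q i) = lam i := by
    intro i
    simpa using hMq i i
  have hlam_nonneg : ∀ i, 0 ≤ lam i := by
    intro i
    have h := hMqq i
    linarith [dot_self_nonneg' (M *ᵥ q i)]
  have hVq_unit : ∀ i, (V *ᵥ q i) ⬝ᵥ (V *ᵥ q i) = 1 := by
    intro i
    rw [dot_mulVec_self V hV, hqorth]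
    simp
  have hMqV : ∀ i, Uᵀ *ᵥ (V *ᵥ q i) = M *ᵥ q i := by
    intro i
    rw [mulVec_mulVec, hM]
  have hlam_le_one : ∀ i, lam i ≤ 1 := by
    intro i
    have h1 : (M *ᵥ q i) = (V *ᵥ q i) ᵥ* U := by rw [← hMqV, mulVec_transpose]
    have h2 := vecMul_dot_le U hU (V *ᵥ q i)
    rw [← h1, hMqq, hVq_unit i] at h2
    exact h2
  set s := opNorm ((1 - U * Uᵀ) * (V * Vᵀ)) with hs
  have hs0 : 0 ≤ s := norm_nonneg _
  have hs2 : (0:ℝ) ≤ s ^ 2 := sq_nonneg s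
  have hkey_lam : ∀ i, 1 - lam i ≤ s ^ 2 := by
    intro i
    have hVVw : (V * Vᵀ) *ᵥ (V *ᵥ q i) = V *ᵥ q i := by
      rw [mulVec_mulVec, Matrix.mul_assoc, hV, Matrix.mul_one]
    have hGw : ((1 - U * Uᵀ) * (V * Vᵀ)) *ᵥ (V *ᵥ q i)
        = V *ᵥ q i - U *ᵥ (M *ᵥ q i) := by
      rw [← mulVec_mulVec, hVVw, sub_mulVec, one_mulVec, ← mulVec_mulVec, hMqV]
    have hwm : (V *ᵥ q i) ⬝ᵥ (U *ᵥ (M *ᵥ q i)) = lam i := by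
      rw [dotProduct_mulVec, ← mulVec_transpose, hMqV, hMqq]
    have hmm : (U *ᵥ (M *ᵥ q i)) ⬝ᵥ (U *ᵥ (M *ᵥ q i)) = lam i := by
      rw [dot_mulVec_self U hU, hMqq]
    have hdot : (((1 - U * Uᵀ) * (V * Vᵀ)) *ᵥ (V *ᵥ q i)) ⬝ᵥ
        (((1 - U * Uᵀ) * (V * Vᵀ)) *ᵥ (V *ᵥ q i)) = 1 - lam i := by
      rw [hGw, sub_dotProduct, dotProduct_sub, dotProduct_sub,
        hVq_unit i, hwm, hmm, dotProduct_comm (U *ᵥ (M *ᵥ q i)) (V *ᵥ q i), hwm]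
      ring
    have hb := vnorm_mulVec_le_opNorm ((1 - U * Uᵀ) * (V * Vᵀ)) (V *ᵥ q i)
    have hw1 : vnorm (V *ᵥ q i) = 1 := by
      rw [vnorm_eq_sqrt_dot, hVq_unit i, Real.sqrt_one]
    rw [hw1, mul_one, ← hs] at hb
    have hsq : vnorm (((1 - U * Uᵀ) * (V * Vᵀ)) *ᵥ (V *ᵥ q i)) ^ 2 = 1 - lam i := by
      rw [vnorm_sq_eq, hdot]
    have h0 := vnorm_nonneg' (((1 - U * Uᵀ) * (V * Vᵀ)) *ᵥ (V *ᵥ q i))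
    nlinarith
  -- orthonormal family on nonzero eigenvalues
  set f : {i : Fin r // lam i ≠ 0} → EuclideanSpace ℝ (Fin r) :=
    fun i => (WithLp.equiv 2 (Fin r → ℝ)).symm ((Real.sqrt (lam i))⁻¹ • (M *ᵥ q i)) with hf
  have hf_inner : ∀ i j, (inner ℝ (f i) (f j) : ℝ) = if i = j then 1 else 0 := by
    intro i j
    simp only [hf]
    rw [inner_symm_eq_dot, smul_dotProduct, dotProduct_smul, hMq i j, smul_eq_mul, smul_eq_mul]
    by_cases hij : (i : Fin r) = (j : Fin r)
    · have hij' : i = j := Subtype.ext hij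
      rw [if_pos hij, if_pos hij', mul_one, hij']
      have hpos : 0 < lam (j : Fin r) := lt_of_le_of_ne (hlam_nonneg _) (Ne.symm j.2)
      have hsqrt : Real.sqrt (lam (j:Fin r)) * Real.sqrt (lam (j:Fin r)) = lam (j:Fin r) :=
        Real.mul_self_sqrt (le_of_lt hpos)
      have hsne : Real.sqrt (lam (j:Fin r)) ≠ 0 := by positivity
      field_simp
      try nlinarith [hsqrt]
    · have hij' : i ≠ j := fun h => hij (congrArg _ h)
      rw [if_neg hij, if_neg hij']
      ring
  have hforth : Orthonormal ℝ f := orthonormal_iff_ite.mpr hf_inner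
  set K := Submodule.span ℝ (Set.range f) with hK
  have hKfin : Module.finrank ℝ K = Fintype.card {i : Fin r // lam i ≠ 0} :=
    finrank_span_eq_card hforth.linearIndependent
  have hcard : Fintype.card {i : Fin r // lam i ≠ 0}
      + Fintype.card {i : Fin r // lam i = 0} = r := by
    have h1 := Fintype.card_subtype_compl (fun i : Fin r => lam i = 0)
    have h2 := Fintype.card_subtype_le (fun i : Fin r => lam i = 0)
    have hNe : Fintype.card {i : Fin r // lam i ≠ 0}
        = Fintype.card {i : Fin r // ¬ lam i = 0} :=
      Fintype.card_congr (Equiv.subtypeEquivRight fun i => Iff.rfl)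
    simp only [Fintype.card_fin] at h1 h2
    omega
  have hperp : Module.finrank ℝ ↥Kᗮ = Fintype.card {i : Fin r // lam i = 0} := by
    have h1 := Submodule.finrank_add_finrank_orthogonal K
    have h2 : Module.finrank ℝ (EuclideanSpace ℝ (Fin r)) = r := by
      simp [finrank_euclideanSpace]
    rw [h2, hKfin] at h1
    omega
  have hcards : Fintype.card (Fin (Module.finrank ℝ ↥Kᗮ))
      = Fintype.card {i : Fin r // lam i = 0} := by
    simp [hperp]
  set e : Fin (Module.finrank ℝ ↥Kᗮ) ≃ {i : Fin r // lam i = 0} :=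
    Fintype.equivOfCardEq hcards with he
  set b := (stdOrthonormalBasis ℝ ↥Kᗮ).reindex e with hb
  set p : Fin r → EuclideanSpace ℝ (Fin r) :=
    fun i => if h : lam i = 0 then ((b ⟨i, h⟩ : ↥Kᗮ) : EuclideanSpace ℝ (Fin r)) else f ⟨i, h⟩
    with hp
  have hp_inner : ∀ i j, (inner ℝ (p i) (p j) : ℝ) = if i = j then 1 else 0 := by
    intro i j
    by_cases hi : lam i = 0 <;> by_cases hj : lam j = 0
    · simp only [hp, dif_pos hi, dif_pos hj]
      have h := orthonormal_iff_ite.mp b.orthonormal ⟨i, hi⟩ ⟨j, hj⟩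
      rw [Submodule.coe_inner] at h
      rw [h]
      simp [Subtype.mk_eq_mk]
    · have hij : i ≠ j := fun h => hj (h ▸ hi)
      simp only [hp, dif_pos hi, dif_neg hj, if_neg hij]
      have hmem : f ⟨j, hj⟩ ∈ K := Submodule.subset_span ⟨⟨j, hj⟩, rfl⟩
      have horth := (Submodule.mem_orthogonal K _).mp (b ⟨i, hi⟩).2
      rw [real_inner_comm]
      exact horth _ hmem
    · have hij : i ≠ j := fun h => hi (h ▸ hj)
      simp only [hp, dif_neg hi, dif_pos hj, if_neg hij]
      have hmem : f ⟨i, hi⟩ ∈ K := Submodule.subset_span ⟨⟨i, hi⟩, rfl⟩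
      have horth := (Submodule.mem_orthogonal K _).mp (b ⟨j, hj⟩).2
      exact horth _ hmem
    · simp only [hp, dif_neg hi, dif_neg hj]
      rw [hf_inner ⟨i, hi⟩ ⟨j, hj⟩]
      simp [Subtype.mk_eq_mk]
  have hp_dot : ∀ i j, (∑ a, p i a * p j a) = if i = j then 1 else 0 := by
    intro i j
    have h := hp_inner i j
    rw [real_inner_comm] at h
    simpa [PiLp.inner_apply, RCLike.inner_apply] using h
  set Q : Matrix (Fin r) (Fin r) ℝ := Matrix.of (fun a i => q i a) with hQdef
  set P : Matrix (Fin r) (Fin r) ℝ := Matrix.of (fun a i => p i a) with hPdef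
  have hQ : Qᵀ * Q = 1 := by
    ext i j
    have h := hqorth i j
    simpa [Matrix.mul_apply, hQdef, dotProduct, Matrix.one_apply] using h
  have hP : Pᵀ * P = 1 := by
    ext i j
    have h := hp_dot i j
    simpa [Matrix.mul_apply, hPdef, Matrix.one_apply] using h
  have hQQ : Q * Qᵀ = 1 := mul_eq_one_comm.mp hQ
  set D : Matrix (Fin r) (Fin r) ℝ := Matrix.diagonal (fun i => Real.sqrt (lam i)) with hD
  have hMQ : M * Q = P * D := by
    ext a j
    have hL : (M * Q) a j = (M *ᵥ q j) a := by
      simp [Matrix.mul_apply, hQdef, Matrix.mulVec, dotProduct]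
    have hR : (P * D) a j = p j a * Real.sqrt (lam j) := by
      rw [hD, Matrix.mul_diagonal, hPdef]
      rfl
    rw [hL, hR]
    by_cases hj : lam j = 0
    · have hz : M *ᵥ q j = 0 := by
        have h := hMqq j
        rw [hj] at h
        exact dotProduct_self_eq_zero.mp h
      rw [hz, hj, Real.sqrt_zero, mul_zero]
      simp
    · have hpj : p j a = (Real.sqrt (lam j))⁻¹ * (M *ᵥ q j) a := by
        simp only [hp, dif_neg hj, hf, WithLp.equiv_symm_apply, PiLp.toLp_apply, Pi.smul_apply, smul_eq_mul]
      have hpos : 0 < lam j := lt_of_le_of_ne (hlam_nonneg j) (Ne.symm hj)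
      have hsne : Real.sqrt (lam j) ≠ 0 := by positivity
      rw [hpj]
      field_simp
  have hMdecomp : M = P * D * Qᵀ := by
    calc M = M * (Q * Qᵀ) := by rw [hQQ, Matrix.mul_one]
      _ = (M * Q) * Qᵀ := by rw [Matrix.mul_assoc]
      _ = P * D * Qᵀ := by rw [hMQ]
  clear_value P Q D p b e K f
  clear hPdef hQdef
  clear hp_dot hp_inner hp
  clear p
  clear hb
  clear b
  clear he
  clear e
  clear hcards hperp
  clear hKfin hcard
  clear hK
  clear K
  clear hforth hf_inner
  clear hf
  clear f
  clear hHq hMq hVq_unit hMqV hMqq hqorth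
  clear hq
  clear q
  clear hlam
  clear hH
  have hMO : M - P * Qᵀ = P * Matrix.diagonal (fun i => Real.sqrt (lam i) - 1) * Qᵀ := by
    have hdiag : Matrix.diagonal (fun i => Real.sqrt (lam i) - 1) = D - 1 := by
      rw [hD, ← Matrix.diagonal_one, Matrix.diagonal_sub]
    rw [hdiag, Matrix.mul_sub, Matrix.mul_one, Matrix.sub_mul, ← hMdecomp]
  have hd : ∀ i, |Real.sqrt (lam i) - 1| ≤ s ^ 2 := by
    intro i
    have h0 := hlam_nonneg i
    have h1 := hlam_le_one i
    have h2 := hkey_lam i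
    have hsq1 : Real.sqrt (lam i) ≤ 1 := by
      have := Real.sqrt_le_sqrt h1
      simpa using this
    have hsq2 : lam i ≤ Real.sqrt (lam i) := by
      nlinarith [Real.sq_sqrt h0, Real.sqrt_nonneg (lam i)]
    rw [abs_le]
    constructor <;> nlinarith
  have hkeyL : ∀ u : Fin r → ℝ, vnorm (u ᵥ* (M - P * Qᵀ)) ≤ s ^ 2 * vnorm u := by
    intro u
    rw [hMO]
    exact vnorm_vecMul_PDQ P Q _ _ hP hQ hs2 hd u
  have hkeyR : ∀ y : Fin r → ℝ, vnorm ((M - P * Qᵀ) *ᵥ y) ≤ s ^ 2 * vnorm y := by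
    intro y
    have ht : (M - P * Qᵀ)ᵀ = Q * Matrix.diagonal (fun i => Real.sqrt (lam i) - 1) * Pᵀ := by
      rw [hMO, Matrix.transpose_mul, Matrix.transpose_mul, Matrix.diagonal_transpose,
        Matrix.transpose_transpose, Matrix.mul_assoc]
    rw [← vecMul_transpose, ht]
    exact vnorm_vecMul_PDQ Q P _ _ hQ hP hs2 hd y
  have hsplit : V - U * (P * Qᵀ) = (V - U * M) + U * (M - P * Qᵀ) := by
    rw [Matrix.mul_sub]
    abel
  have hrow : ∀ x : Fin n → ℝ, vnorm (x ᵥ* (V - U * (P * Qᵀ))) ≤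
      vnorm (x ᵥ* (V - U * M)) + vnorm (x ᵥ* U) * s ^ 2 := by
    intro x
    rw [hsplit, vecMul_add]
    refine (vnorm_add_le _ _).trans ?_
    have h1 : x ᵥ* (U * (M - P * Qᵀ)) = (x ᵥ* U) ᵥ* (M - P * Qᵀ) := (vecMul_vecMul _ _ _).symm
    have h2 := hkeyL (x ᵥ* U)
    rw [h1]
    linarith [mul_comm (s ^ 2) (vnorm (x ᵥ* U))]
  have hOorth : (P * Qᵀ)ᵀ * (P * Qᵀ) = 1 := by
    rw [Matrix.transpose_mul, Matrix.transpose_transpose, Matrix.mul_assoc,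
      ← Matrix.mul_assoc Pᵀ P Qᵀ, hP, Matrix.one_mul, hQQ]
  refine ⟨P * Qᵀ, hOorth, fun x _ => hrow x, ?_, ?_⟩
  · intro x y hx hy
    have hsplit' : (V - U * (P * Qᵀ)) *ᵥ y = (V - U * M) *ᵥ y + (U * (M - P * Qᵀ)) *ᵥ y := by
      rw [hsplit, add_mulVec]
    rw [hsplit', dotProduct_add]
    refine (abs_add_le _ _).trans ?_
    have h1 : x ⬝ᵥ ((U * (M - P * Qᵀ)) *ᵥ y) = (x ᵥ* U) ⬝ᵥ ((M - P * Qᵀ) *ᵥ y) := by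
      rw [← mulVec_mulVec, dotProduct_mulVec]
    have h2 : |x ⬝ᵥ ((U * (M - P * Qᵀ)) *ᵥ y)| ≤ vnorm (x ᵥ* U) * s ^ 2 := by
      rw [h1]
      refine (abs_dot_le _ _).trans ?_
      have h3 := hkeyR y
      rw [hy, mul_one] at h3
      exact mul_le_mul_of_nonneg_left h3 (vnorm_nonneg' _)
    linarith
  · have hne : Nonempty (Fin n) := ⟨⟨0, hn⟩⟩
    unfold twoInf
    refine ciSup_le fun i => ?_
    have h := hrow (Pi.single i 1)
    rw [single_vecMul_row, single_vecMul_row, single_vecMul_row] at h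
    refine h.trans (add_le_add ?_ ?_)
    · exact le_ciSup (f := fun j => vnorm ((V - U * M) j))
        (Set.Finite.bddAbove (Set.finite_range _)) i
    · exact mul_le_mul_of_nonneg_right
        (le_ciSup (f := fun j => vnorm (U j))
          (Set.Finite.bddAbove (Set.finite_range _)) i) hs2
end
end

section
/- Let U, V ∈ ℝ^{n×r} have orthonormal columns and let ⦀·⦀ be any normalized unitarily invariant norm on n×r real matrices. Then there exists an orthogonal matrix O ∈ ℝ^{r×r} such that ⦀UO − V⦀ ≤ √2·⦀(I_n − UUᵀ)·V⦀. (The singular values of (I_n − UUᵀ)·V are the sines of the r principal angles between the column spans of U and V.) -/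
open MeasureTheory ProbabilityTheory Matrix

noncomputable section

section ProcAux

section Aux

def padded {n r : ℕ} (d : Fin r → ℝ) : Matrix (Fin n) (Fin r) ℝ :=
  Matrix.of fun p q => if (p : ℕ) = (q : ℕ) then d q else 0

lemma gram_entry {n r : ℕ} {X : Matrix (Fin n) (Fin r) ℝ} {d : Fin r → ℝ}
    (hX : Xᵀ * X = diagonal d) (i j : Fin r) :
    (∑ p, X p i * X p j) = if i = j then d i else 0 := by
  have := congrFun (congrFun hX i) j
  simp only [Matrix.mul_apply, diagonal, transpose_apply, of_apply] at this
  exact this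

lemma gram_diag {n r : ℕ} {X : Matrix (Fin n) (Fin r) ℝ} {d : Fin r → ℝ}
    (hX : Xᵀ * X = diagonal d) (i : Fin r) :
    (∑ p, X p i * X p i) = d i := by
  have h := gram_entry hX i i
  rwa [if_pos rfl] at h

lemma gram_diag_nonneg {n r : ℕ} {X : Matrix (Fin n) (Fin r) ℝ} {d : Fin r → ℝ}
    (hX : Xᵀ * X = diagonal d) (i : Fin r) : 0 ≤ d i := by
  rw [← gram_diag hX i]
  exact Finset.sum_nonneg fun p _ => mul_self_nonneg _

lemma colFact {n r : ℕ} (hrn : r ≤ n) (X : Matrix (Fin n) (Fin r) ℝ) (d : Fin r → ℝ)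
    (hX : Xᵀ * X = diagonal d) :
    ∃ Q : Matrix (Fin n) (Fin n) ℝ, Qᵀ * Q = 1 ∧
      X = Q * (padded (fun i => Real.sqrt (d i)) : Matrix (Fin n) (Fin r) ℝ) := by
  classical
  have hd : ∀ i, 0 ≤ d i := gram_diag_nonneg hX
  set v : Fin n → EuclideanSpace ℝ (Fin n) := fun i =>
    if h : (i : ℕ) < r then WithLp.toLp 2 ((Real.sqrt (d ⟨i, h⟩))⁻¹ • (fun p => X p ⟨i, h⟩)) else 0 with hv
  set s : Set (Fin n) := {i | ∃ h : (i : ℕ) < r, 0 < d ⟨i, h⟩} with hs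
  have hinner : ∀ (i j : Fin n) (hi : (i:ℕ) < r) (hj : (j:ℕ) < r),
      (inner ℝ (v i) (v j) : ℝ) =
        (Real.sqrt (d ⟨i, hi⟩))⁻¹ * (Real.sqrt (d ⟨j, hj⟩))⁻¹ *
          (if (⟨i,hi⟩ : Fin r) = ⟨j,hj⟩ then d ⟨i,hi⟩ else 0) := by
    intro i j hi hj
    rw [← gram_entry hX]
    simp only [hv, dif_pos hi, dif_pos hj, PiLp.inner_apply, RCLike.inner_apply,
      starRingEnd_apply, star_trivial, PiLp.toLp_apply, PiLp.smul_apply, Pi.smul_apply, smul_eq_mul]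
    rw [Finset.mul_sum]
    exact Finset.sum_congr rfl fun p _ => by ring
  have hortho : Orthonormal ℝ (s.restrict v) := by
    rw [orthonormal_iff_ite]
    rintro ⟨i, hi, hdi⟩ ⟨j, hj, hdj⟩
    change inner ℝ (v i) (v j) = _
    rw [hinner i j hi hj]
    by_cases hij : i = j
    · subst hij
      rw [if_pos rfl, if_pos rfl]
      have he : (⟨(i:ℕ), hj⟩ : Fin r) = ⟨(i:ℕ), hi⟩ := rfl
      rw [he]
      have hne : Real.sqrt (d ⟨(i:ℕ), hi⟩) ≠ 0 := Real.sqrt_ne_zero'.mpr hdi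
      field_simp
      rw [Real.sq_sqrt (le_of_lt hdi)]
    · have h1 : ¬((⟨i,hi⟩ : Fin r) = ⟨j,hj⟩) :=
        fun h => hij (Fin.ext (by simpa using h))
      have h2 : ¬((⟨i, hi, hdi⟩ : s) = ⟨j, hj, hdj⟩) := fun h =>
        hij (congrArg Subtype.val h)
      rw [if_neg h1, if_neg h2]
      ring
  obtain ⟨b, hb⟩ := hortho.exists_orthonormalBasis_extension_of_card_eq
    (by simp [finrank_euclideanSpace])
  set Q : Matrix (Fin n) (Fin n) ℝ := Matrix.of fun p i => b i p with hQdef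
  refine ⟨Q, ?_, ?_⟩
  · ext i j
    have := (orthonormal_iff_ite (𝕜 := ℝ)).mp b.orthonormal i j
    simp only [PiLp.inner_apply, RCLike.inner_apply, starRingEnd_apply, star_trivial] at this
    simp only [Matrix.mul_apply, transpose_apply, hQdef, of_apply, one_apply]
    rw [← this]
    exact Finset.sum_congr rfl fun _ _ => mul_comm _ _
  · ext p q
    have hq : (q : ℕ) < n := lt_of_lt_of_le q.isLt hrn
    set qc : Fin n := ⟨q, hq⟩ with hqc
    have hsum : (Q * (padded (fun i => Real.sqrt (d i)) : Matrix (Fin n) (Fin r) ℝ)) p q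
        = b qc p * Real.sqrt (d q) := by
      simp only [Matrix.mul_apply, padded, hQdef, of_apply]
      rw [Finset.sum_eq_single qc]
      · rw [if_pos rfl]
      · intro c _ hc
        rw [if_neg, mul_zero]
        intro h; exact hc (Fin.ext h)
      · intro h; exact absurd (Finset.mem_univ qc) h
    rw [hsum]
    rcases eq_or_lt_of_le (hd q) with h0 | hpos
    · have hXpq : X p q = 0 := by
        have hsq := gram_diag hX q
        rw [← h0] at hsq
        have := (Finset.sum_eq_zero_iff_of_nonneg
          (fun p _ => mul_self_nonneg (X p q))).mp hsq p (Finset.mem_univ p)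
        nlinarith [this]
      rw [hXpq, ← h0]
      simp
    · have hqs : qc ∈ s := ⟨q.isLt, by simpa using hpos⟩
      rw [hb qc hqs]
      simp only [hv, dif_pos (show ((qc:ℕ) < r) from q.isLt)]
      have hfin : (⟨(qc : ℕ), q.isLt⟩ : Fin r) = q := Fin.ext rfl
      rw [hfin]
      simp only [Pi.smul_apply, smul_eq_mul]
      rw [mul_comm ((Real.sqrt (d q))⁻¹) (X p q), mul_assoc,
        inv_mul_cancel₀ (Real.sqrt_ne_zero'.mpr hpos), mul_one]


lemma padded_mono {n r : ℕ} (nnorm : Matrix (Fin n) (Fin r) ℝ → ℝ)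
    (hnadd : ∀ M₁ M₂, nnorm (M₁ + M₂) ≤ nnorm M₁ + nnorm M₂)
    (hnsmul : ∀ (c : ℝ) M, nnorm (c • M) = |c| * nnorm M)
    (hninvR : ∀ (R : Matrix (Fin r) (Fin r) ℝ) M, Rᵀ * R = 1 → nnorm (M * R) = nnorm M)
    (a b : Fin r → ℝ) (ha : ∀ i, 0 ≤ a i) (hab : ∀ i, a i ≤ b i) :
    nnorm (padded a) ≤ nnorm (padded b) := by
  classical
  set mix : ℕ → Fin r → ℝ := fun k i => if (i : ℕ) < k then a i else b i with hmix
  have key : ∀ k, nnorm (padded (mix k)) ≤ nnorm (padded b) := by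
    intro k
    induction k with
    | zero =>
      have : mix 0 = b := by funext i; simp [hmix]
      rw [this]
    | succ k ih =>
      by_cases hk : k < r
      · set j : Fin r := ⟨k, hk⟩ with hj
        set t : ℝ := if b j = 0 then 0 else a j / b j with ht
        have hbj : 0 ≤ b j := le_trans (ha j) (hab j)
        have ht0 : 0 ≤ t := by
          rw [ht]; split_ifs with h
          · exact le_refl 0
          · exact div_nonneg (ha j) hbj
        have ht1 : t ≤ 1 := by
          rw [ht]; split_ifs with h
          · exact zero_le_one
          · exact div_le_one_of_le₀ (hab j) hbj
        have htb : t * b j = a j := by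
          rw [ht]; split_ifs with h
          · have haj : a j = 0 := le_antisymm (h ▸ hab j) (ha j)
            rw [zero_mul, haj]
          · rw [div_mul_cancel₀ _ h]
        set R : Matrix (Fin r) (Fin r) ℝ :=
          diagonal (fun i => if i = j then (-1 : ℝ) else 1) with hR
        have hRorth : Rᵀ * R = 1 := by
          rw [hR, diagonal_transpose, diagonal_mul_diagonal]
          ext i l
          by_cases hil : i = l
          · subst hil; simp [one_apply]; split_ifs <;> norm_num
          · simp [diagonal, one_apply, hil]
        have hdecomp : (padded (mix (k+1)) : Matrix (Fin n) (Fin r) ℝ) =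
            ((1+t)/2) • padded (mix k) + ((1-t)/2) • (padded (mix k) * R) := by
          ext p q
          simp only [padded, Matrix.add_apply, Matrix.smul_apply, mul_diagonal,
            of_apply, smul_eq_mul, hR, Matrix.mul_apply]
          rw [Finset.sum_eq_single q]
          · by_cases hpq : (p : ℕ) = (q : ℕ)
            · simp only [if_pos hpq, diagonal_apply_eq]
              by_cases hqj : q = j
              · subst hqj
                have h1 : mix (k+1) j = a j := by
                  simp [hmix, hj]
                have h2 : mix k j = b j := by
                  simp [hmix, hj]
                rw [h1, h2, if_pos rfl]
                rw [← htb]; ring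
              · have hqk : (q : ℕ) ≠ k := fun h => hqj (Fin.ext h)
                have h3 : mix (k+1) q = mix k q := by
                  simp only [hmix]
                  congr 1
                  simp only [eq_iff_iff]
                  omega
                rw [h3, if_neg hqj]; ring
            · simp [if_neg hpq]
          · intro c _ hc
            rw [diagonal_apply_ne _ hc, mul_zero]
          · intro h; exact absurd (Finset.mem_univ q) h
        calc nnorm (padded (mix (k+1)))
            = nnorm (((1+t)/2) • padded (mix k) + ((1-t)/2) • (padded (mix k) * R)) := by
              rw [hdecomp]
          _ ≤ nnorm (((1+t)/2) • padded (mix k)) + nnorm (((1-t)/2) • (padded (mix k) * R)) :=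
              hnadd _ _
          _ = ((1+t)/2) * nnorm (padded (mix k)) + ((1-t)/2) * nnorm (padded (mix k) * R) := by
              rw [hnsmul, hnsmul, abs_of_nonneg (by linarith), abs_of_nonneg (by linarith)]
          _ = nnorm (padded (mix k)) := by
              rw [hninvR R _ hRorth]; ring
          _ ≤ nnorm (padded b) := ih
      · have : mix (k+1) = mix k := by
          funext i
          simp only [hmix]
          congr 1
          simp only [eq_iff_iff]
          have := i.isLt
          omega
        rw [this]; exact ih
  have hfin : mix r = a := by
    funext i; simp [hmix, i.isLt]
  have := key r
  rwa [hfin] at this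

lemma padded_sq {r : ℕ} (d : Fin r → ℝ) :
    (padded d : Matrix (Fin r) (Fin r) ℝ) = diagonal d := by
  ext i j
  by_cases h : i = j
  · subst h; simp [padded]
  · rw [diagonal_apply_ne _ h]
    simp only [padded, of_apply]
    rw [if_neg (fun hh => h (Fin.ext hh))]
end Aux

end ProcAux

/-- inequality (12) of the paper: Procrustes bound for an arbitrary
normalized unitarily invariant norm. -/
theorem stmt13_procrustes_unitarily_invariant
    (n r : ℕ) (hn : 0 < n) (hr : 0 < r) (hrn : r ≤ n)
    (U V : Matrix (Fin n) (Fin r) ℝ) (hU : Uᵀ * U = 1) (hV : Vᵀ * V = 1)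
    (nnorm : Matrix (Fin n) (Fin r) ℝ → ℝ)
    (hnadd : ∀ M₁ M₂, nnorm (M₁ + M₂) ≤ nnorm M₁ + nnorm M₂)
    (hnsmul : ∀ (c : ℝ) M, nnorm (c • M) = |c| * nnorm M)
    (hndef : ∀ M, nnorm M = 0 ↔ M = 0)
    (hninv : ∀ (Q₁ : Matrix (Fin n) (Fin n) ℝ) (Q₂ : Matrix (Fin r) (Fin r) ℝ)
      (M : Matrix (Fin n) (Fin r) ℝ),
      Q₁ᵀ * Q₁ = 1 → Q₂ᵀ * Q₂ = 1 → nnorm (Q₁ * M * Q₂) = nnorm M)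
    (hnone : ∀ M : Matrix (Fin n) (Fin r) ℝ,
      (∀ p q, M p q = if p = (⟨0, hn⟩ : Fin n) ∧ q = (⟨0, hr⟩ : Fin r) then 1 else 0) →
      nnorm M = 1) :
    ∃ O : Matrix (Fin r) (Fin r) ℝ, Oᵀ * O = 1 ∧
      nnorm (U * O - V) ≤ Real.sqrt 2 * nnorm ((1 - U * Uᵀ) * V) := by
  classical
  set M : Matrix (Fin r) (Fin r) ℝ := Uᵀ * V with hMdef
  have hS : (Mᵀ * M).IsHermitian := isHermitian_conjTranspose_mul_self M
  set P : Matrix (Fin r) (Fin r) ℝ := (hS.eigenvectorUnitary : Matrix (Fin r) (Fin r) ℝ)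
    with hPdef
  set μ : Fin r → ℝ := hS.eigenvalues with hμdef
  have hPo : Pᵀ * P = 1 := by
    have := hS.eigenvectorUnitary.2
    rw [Matrix.mem_unitaryGroup_iff'] at this
    simpa [star_eq_conjTranspose, conjTranspose_eq_transpose_of_trivial] using this
  have hPo' : P * Pᵀ = 1 := mul_eq_one_comm.mp hPo
  have hdiagS : Pᵀ * (Mᵀ * M) * P = diagonal μ := by
    have h := hS.conjStarAlgAut_star_eigenvectorUnitary
    rw [Unitary.conjStarAlgAut_star_apply] at h
    rw [star_eq_conjTranspose, conjTranspose_eq_transpose_of_trivial] at h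
    simpa using h
  have hMP : (M * P)ᵀ * (M * P) = diagonal μ := by
    rw [transpose_mul]
    have h1 : Pᵀ * Mᵀ * (M * P) = Pᵀ * (Mᵀ * M) * P := by simp only [Matrix.mul_assoc]
    rw [h1, hdiagS]
  obtain ⟨W, hW, hMPW⟩ := colFact (le_refl r) (M * P) μ hMP
  set c : Fin r → ℝ := fun i => Real.sqrt (μ i) with hcdef
  set O : Matrix (Fin r) (Fin r) ℝ := W * Pᵀ with hOdef
  have hOo : Oᵀ * O = 1 := by
    rw [hOdef, transpose_mul, transpose_transpose]
    have h1 : P * Wᵀ * (W * Pᵀ) = P * (Wᵀ * W) * Pᵀ := by simp only [Matrix.mul_assoc]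
    rw [h1, hW, Matrix.mul_one, hPo']
  have hM : M = W * padded c * Pᵀ := by
    have h1 : M = M * (P * Pᵀ) := by rw [hPo', Matrix.mul_one]
    rw [h1, ← Matrix.mul_assoc, hMPW]
  have hOM : Oᵀ * M = P * padded c * Pᵀ := by
    rw [hOdef, hM, transpose_mul, transpose_transpose]
    have h1 : P * Wᵀ * (W * padded c * Pᵀ) = P * (Wᵀ * W) * (padded c * Pᵀ) := by
      simp only [Matrix.mul_assoc]
    rw [h1, hW, Matrix.mul_one, Matrix.mul_assoc]
  have hMO : Mᵀ * O = P * padded c * Pᵀ := by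
    have h1 : (Oᵀ * M)ᵀ = Mᵀ * O := by
      rw [transpose_mul Oᵀ M, transpose_transpose]
    rw [← h1, hOM, transpose_mul (P * padded c) Pᵀ, transpose_mul P (padded c),
      transpose_transpose, padded_sq, diagonal_transpose, ← padded_sq, ← Matrix.mul_assoc]
  set A : Matrix (Fin n) (Fin r) ℝ := U * O - V with hAdef
  have hUO : (U * O)ᵀ * (U * O) = 1 := by
    rw [transpose_mul]
    have h1 : Oᵀ * Uᵀ * (U * O) = Oᵀ * (Uᵀ * U) * O := by simp only [Matrix.mul_assoc]
    rw [h1, hU, Matrix.mul_one, hOo]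
  have hUOV : (U * O)ᵀ * V = Oᵀ * M := by
    rw [transpose_mul, Matrix.mul_assoc, hMdef]
  have hVUO : Vᵀ * (U * O) = Mᵀ * O := by
    rw [← Matrix.mul_assoc, hMdef, transpose_mul, transpose_transpose]
  have hAtA : Aᵀ * A = 1 - (P * padded c * Pᵀ) - (P * padded c * Pᵀ) + 1 := by
    rw [hAdef, transpose_sub, Matrix.sub_mul, Matrix.mul_sub, Matrix.mul_sub,
      hUO, hUOV, hVUO, hV, hOM, hMO]
    abel
  have hAA : (A * P)ᵀ * (A * P) = diagonal (fun i => 2 - 2 * c i) := by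
    rw [transpose_mul]
    have h1 : Pᵀ * Aᵀ * (A * P) = Pᵀ * (Aᵀ * A) * P := by simp only [Matrix.mul_assoc]
    rw [h1, hAtA]
    have h2 : Pᵀ * (P * padded c * Pᵀ) * P = padded c := by
      have e1 : Pᵀ * (P * padded c * Pᵀ) * P = (Pᵀ * P) * padded c * (Pᵀ * P) := by
        simp only [Matrix.mul_assoc]
      rw [e1, hPo, Matrix.one_mul, Matrix.mul_one]
    rw [Matrix.mul_add, Matrix.mul_sub, Matrix.mul_sub, Matrix.add_mul, Matrix.sub_mul,
      Matrix.sub_mul, Matrix.mul_one, h2, hPo]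
    rw [padded_sq]
    ext i j
    by_cases hij : i = j
    · subst hij; simp [one_apply, diagonal]; ring
    · simp [one_apply, hij, diagonal_apply_ne _ hij]
  set B : Matrix (Fin n) (Fin r) ℝ := (1 - U * Uᵀ) * V with hBdef
  have hproj : ((1 : Matrix (Fin n) (Fin n) ℝ) - U * Uᵀ) * (1 - U * Uᵀ) = 1 - U * Uᵀ := by
    have h1 : U * Uᵀ * (U * Uᵀ) = U * Uᵀ := by
      have e1 : U * Uᵀ * (U * Uᵀ) = U * (Uᵀ * U) * Uᵀ := by simp only [Matrix.mul_assoc]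
      rw [e1, hU, Matrix.mul_one]
    rw [Matrix.sub_mul, Matrix.one_mul, Matrix.mul_sub, Matrix.mul_one, h1]
    abel
  have hBtB : Bᵀ * B = 1 - Mᵀ * M := by
    have hBt : Bᵀ = Vᵀ * (1 - U * Uᵀ) := by
      rw [hBdef, transpose_mul, transpose_sub, transpose_one, transpose_mul,
        transpose_transpose]
    rw [hBt, hBdef]
    have e1 : Vᵀ * (1 - U * Uᵀ) * ((1 - U * Uᵀ) * V) =
        Vᵀ * ((1 - U * Uᵀ) * (1 - U * Uᵀ)) * V := by simp only [Matrix.mul_assoc]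
    rw [e1, hproj, Matrix.mul_sub, Matrix.sub_mul, Matrix.mul_one, hV]
    have e2 : Vᵀ * (U * Uᵀ) * V = Mᵀ * M := by
      rw [hMdef, transpose_mul, transpose_transpose]
      simp only [Matrix.mul_assoc]
    rw [e2]
  have hBB : (B * P)ᵀ * (B * P) = diagonal (fun i => 1 - μ i) := by
    rw [transpose_mul]
    have h1 : Pᵀ * Bᵀ * (B * P) = Pᵀ * (Bᵀ * B) * P := by simp only [Matrix.mul_assoc]
    rw [h1, hBtB, Matrix.mul_sub, Matrix.mul_one, Matrix.sub_mul, hPo]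
    have h2 : Pᵀ * (Mᵀ * M) * P = diagonal μ := hdiagS
    rw [h2]
    ext i j
    by_cases hij : i = j
    · subst hij; simp [one_apply, diagonal]
    · simp [one_apply, hij, diagonal_apply_ne _ hij]
  obtain ⟨QA, hQA, hAP⟩ := colFact hrn (A * P) _ hAA
  obtain ⟨QB, hQB, hBP⟩ := colFact hrn (B * P) _ hBB
  have hone_n : ((1 : Matrix (Fin n) (Fin n) ℝ))ᵀ * 1 = 1 := by
    rw [transpose_one, Matrix.mul_one]
  have hone_r : ((1 : Matrix (Fin r) (Fin r) ℝ))ᵀ * 1 = 1 := by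
    rw [transpose_one, Matrix.mul_one]
  have hnA : nnorm A = nnorm (padded (fun i => Real.sqrt (2 - 2 * c i))) := by
    have e1 : nnorm ((1 : Matrix (Fin n) (Fin n) ℝ) * A * P) = nnorm A := hninv 1 P A hone_n hPo
    rw [Matrix.one_mul] at e1
    have e2 : nnorm (QA * (padded (fun i => Real.sqrt (2 - 2 * c i)) : Matrix (Fin n) (Fin r) ℝ) * (1 : Matrix (Fin r) (Fin r) ℝ)) =
        nnorm (padded (fun i => Real.sqrt (2 - 2 * c i))) :=
      hninv QA 1 _ hQA hone_r
    rw [Matrix.mul_one, ← hAP] at e2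
    rw [← e1, e2]
  have hnB : nnorm B = nnorm (padded (fun i => Real.sqrt (1 - μ i))) := by
    have e1 : nnorm ((1 : Matrix (Fin n) (Fin n) ℝ) * B * P) = nnorm B := hninv 1 P B hone_n hPo
    rw [Matrix.one_mul] at e1
    have e2 : nnorm (QB * (padded (fun i => Real.sqrt (1 - μ i)) : Matrix (Fin n) (Fin r) ℝ) * (1 : Matrix (Fin r) (Fin r) ℝ)) =
        nnorm (padded (fun i => Real.sqrt (1 - μ i))) :=
      hninv QB 1 _ hQB hone_r
    rw [Matrix.mul_one, ← hBP] at e2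
    rw [← e1, e2]
  -- inequalities on the diagonal entries
  have hμ0 : ∀ i, 0 ≤ μ i := gram_diag_nonneg hMP
  have h2c : ∀ i, 0 ≤ 2 - 2 * c i := gram_diag_nonneg hAA
  have hkey : ∀ i, Real.sqrt (2 - 2 * c i) ≤
      Real.sqrt 2 * Real.sqrt (1 - μ i) := by
    intro i
    have hc0 : 0 ≤ c i := Real.sqrt_nonneg _
    have hc1 : c i ≤ 1 := by have := h2c i; linarith
    have hcsq : c i * c i = μ i := Real.mul_self_sqrt (hμ0 i)
    have h1 : 2 - 2 * c i ≤ 2 * (1 - μ i) := by nlinarith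
    calc Real.sqrt (2 - 2 * c i) ≤ Real.sqrt (2 * (1 - μ i)) := Real.sqrt_le_sqrt h1
      _ = Real.sqrt 2 * Real.sqrt (1 - μ i) := Real.sqrt_mul (by norm_num) _
  have hmono := padded_mono nnorm hnadd hnsmul
    (fun R Mx hR => by
      have := hninv 1 R Mx hone_n hR
      rwa [Matrix.one_mul] at this)
    (fun i => Real.sqrt (2 - 2 * c i)) (fun i => Real.sqrt 2 * Real.sqrt (1 - μ i))
    (fun i => Real.sqrt_nonneg _) hkey
  have hsm : (padded (fun i => Real.sqrt 2 * Real.sqrt (1 - μ i)) :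
      Matrix (Fin n) (Fin r) ℝ) = Real.sqrt 2 • padded (fun i => Real.sqrt (1 - μ i)) := by
    ext p q
    simp only [padded, Matrix.smul_apply, of_apply, smul_eq_mul, mul_ite, mul_zero]
  refine ⟨O, hOo, ?_⟩
  show nnorm A ≤ Real.sqrt 2 * nnorm B
  rw [hnA, hnB]
  calc nnorm (padded fun i => Real.sqrt (2 - 2 * c i))
      ≤ nnorm (padded fun i => Real.sqrt 2 * Real.sqrt (1 - μ i)) := hmono
    _ = Real.sqrt 2 * nnorm (padded fun i => Real.sqrt (1 - μ i)) := by
        rw [hsm, hnsmul, abs_of_nonneg (Real.sqrt_nonneg _)]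
end
end
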